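/- For any nonzero elements q, r of the ring Z[1/√2] with sde(q) > sde(r), we have sde((q+r)/√2) = sde(q)+1 and sde((q−r)/√2) = sde(q)+1. -/

import Mathlib

/-- The ring `ℤ[1/√2]`: real numbers of the form `(a + b√2)/√2^k`. -/
def Zroot2 (v : ℝ) : Prop :=
  ∃ (a b : ℤ) (k : ℕ), v = (a + b * Real.sqrt 2) / (Real.sqrt 2) ^ k

/-- The smallest denominator exponent of `v ∈ ℤ[1/√2]`. -/
noncomputable def sde (v : ℝ) : ℕ :=
  sInf {k : ℕ | ∃ a b : ℤ, v = (a + b * Real.sqrt 2) / (Real.sqrt 2) ^ k}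

private lemma sqrt2_ne : Real.sqrt 2 ≠ 0 := by positivity

private lemma sqrt2_mul_self : Real.sqrt 2 * Real.sqrt 2 = 2 :=
  Real.mul_self_sqrt (by norm_num)

private lemma coeff_unique {a b c d : ℤ}
    (h : (a : ℝ) + b * Real.sqrt 2 = (c : ℝ) + d * Real.sqrt 2) : a = c ∧ b = d := by
  by_cases hbd : b = d
  · subst hbd
    have : (a : ℝ) = c := by linarith
    exact ⟨by exact_mod_cast this, rfl⟩
  · exfalso
    have hdb : ((d - b : ℤ) : ℝ) ≠ 0 := by
      have : (d - b : ℤ) ≠ 0 := sub_ne_zero.mpr (fun hh => hbd hh.symm)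
      exact_mod_cast this
    have hs : Real.sqrt 2 = ((a - c : ℤ) : ℝ) / ((d - b : ℤ) : ℝ) := by
      rw [eq_div_iff hdb]; push_cast; linarith
    exact irrational_sqrt_two ⟨((a - c : ℤ) : ℚ) / ((d - b : ℤ) : ℚ), by
      push_cast; rw [hs]; push_cast; ring⟩

private lemma bump (a b : ℤ) (k : ℕ) :
    ((a : ℝ) + b * Real.sqrt 2) / (Real.sqrt 2) ^ k
      = (((2 * b : ℤ) : ℝ) + (a : ℝ) * Real.sqrt 2) / (Real.sqrt 2) ^ (k + 1) := by
  have key : (((2 * b : ℤ) : ℝ) + (a : ℝ) * Real.sqrt 2)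
      = ((a : ℝ) + b * Real.sqrt 2) * Real.sqrt 2 := by
    push_cast
    rw [add_mul, mul_assoc, sqrt2_mul_self]; ring
  rw [key, pow_succ, mul_div_mul_right _ _ sqrt2_ne]

private lemma sde_mem_self {v : ℝ} {a0 b0 : ℤ} {k0 : ℕ}
    (h0 : v = ((a0 : ℝ) + b0 * Real.sqrt 2) / (Real.sqrt 2) ^ k0) :
    ∃ a b : ℤ, v = ((a : ℝ) + b * Real.sqrt 2) / (Real.sqrt 2) ^ (sde v) :=
  Nat.sInf_mem (s := {k : ℕ | ∃ a b : ℤ, v = ((a : ℝ) + b * Real.sqrt 2) / (Real.sqrt 2) ^ k})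
    ⟨k0, a0, b0, h0⟩

private lemma mem_of_sde_le {v : ℝ} {k : ℕ}
    (hmem : ∃ a b : ℤ, v = ((a : ℝ) + b * Real.sqrt 2) / (Real.sqrt 2) ^ (sde v))
    (h : sde v ≤ k) :
    ∃ a b : ℤ, v = ((a : ℝ) + b * Real.sqrt 2) / (Real.sqrt 2) ^ k := by
  induction k with
  | zero => simpa [Nat.le_zero.mp h] using hmem
  | succ n ih =>
    rcases Nat.lt_or_ge (sde v) (n + 1) with h' | h'
    · obtain ⟨a, b, hab⟩ := ih (Nat.lt_succ_iff.mp h')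
      exact ⟨2 * b, a, by rw [hab, bump]⟩
    · have : sde v = n + 1 := le_antisymm h h'
      rw [← this]; exact hmem

private lemma sde_eq_of_odd {v : ℝ} {a b : ℤ} {k : ℕ} (ha : Odd a)
    (hrep : v = ((a : ℝ) + b * Real.sqrt 2) / (Real.sqrt 2) ^ (k + 1)) :
    sde v = k + 1 := by
  have hle : sde v ≤ k + 1 := Nat.sInf_le ⟨a, b, hrep⟩
  rcases Nat.lt_or_ge (sde v) (k + 1) with hlt | hge
  · exfalso
    have hmem := sde_mem_self hrep
    obtain ⟨c, d, hcd⟩ := mem_of_sde_le hmem (Nat.lt_succ_iff.mp hlt)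
    rw [bump] at hcd
    have hnum : ((a : ℝ) + b * Real.sqrt 2) = ((2 * d : ℤ) : ℝ) + (c : ℝ) * Real.sqrt 2 := by
      have hD : (Real.sqrt 2 : ℝ) ^ (k + 1) ≠ 0 := pow_ne_zero _ sqrt2_ne
      have := hrep.symm.trans hcd
      field_simp at this
      push_cast
      push_cast at this; linarith
    obtain ⟨h1, _⟩ := coeff_unique hnum
    rcases ha with ⟨m, hm⟩
    omega
  · exact le_antisymm hle hge

theorem sde_add_sub_div_sqrt_two (q r : ℝ) (hq : Zroot2 q) (hr : Zroot2 r)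
    (hq0 : q ≠ 0) (hr0 : r ≠ 0) (h : sde r < sde q) :
    sde ((q + r) / Real.sqrt 2) = sde q + 1 ∧
    sde ((q - r) / Real.sqrt 2) = sde q + 1 := by
  obtain ⟨k, hk⟩ : ∃ k, sde q = k + 1 := ⟨sde q - 1, by omega⟩
  -- representation of q at its sde
  obtain ⟨a0, b0, k0, hq'⟩ := hq
  have hqmem := sde_mem_self hq'
  obtain ⟨a, b, hqr⟩ := hqmem
  rw [hk] at hqr
  -- a is odd
  have ha : Odd a := by
    rw [Int.not_even_iff_odd.symm]
    intro ⟨m, hm⟩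
    have : q = ((b : ℝ) + m * Real.sqrt 2) / (Real.sqrt 2) ^ k := by
      rw [bump b m k, hqr, hm]; push_cast; ring_nf
    have hle : sde q ≤ k := Nat.sInf_le ⟨b, m, this⟩
    omega
  -- representation of r at level k with even plan: bump from level k
  obtain ⟨c0, d0, k1, hr'⟩ := hr
  have hrmem := sde_mem_self hr'
  obtain ⟨c, d, hrk⟩ := mem_of_sde_le hrmem (by omega : sde r ≤ k)
  have hrk1 : r = (((2 * d : ℤ) : ℝ) + (c : ℝ) * Real.sqrt 2) / (Real.sqrt 2) ^ (k + 1) := by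
    rw [hrk, bump]
  have hDiv : ∀ x : ℝ, x / (Real.sqrt 2) ^ (k + 1) / Real.sqrt 2
      = x / (Real.sqrt 2) ^ (k + 1 + 1) := by
    intro x; rw [div_div, ← pow_succ]
  constructor
  · have hrep : (q + r) / Real.sqrt 2
        = (((a + 2 * d : ℤ) : ℝ) + ((b + c : ℤ) : ℝ) * Real.sqrt 2)
            / (Real.sqrt 2) ^ (k + 1 + 1) := by
      rw [hqr, hrk1, ← add_div, hDiv]; push_cast; ring_nf
    rw [hk]
    exact sde_eq_of_odd (by rcases ha with ⟨m, hm⟩; exact ⟨m + d, by omega⟩) hrep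
  · have hrep : (q - r) / Real.sqrt 2
        = (((a - 2 * d : ℤ) : ℝ) + ((b - c : ℤ) : ℝ) * Real.sqrt 2)
            / (Real.sqrt 2) ^ (k + 1 + 1) := by
      rw [hqr, hrk1, div_sub_div_same, hDiv]; push_cast; ring_nf
    rw [hk]
    exact sde_eq_of_odd (by rcases ha with ⟨m, hm⟩; exact ⟨m - d, by omega⟩) hrep
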